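/- Assume a ≠ 1 and set L = ln b / ln a. Let I₀ : (0,∞) → ℝ be any given function. Then there is at most one function I : (0,∞) → ℝ satisfying both I(a·y) + b·I(y) = (1+b)·I₀(c·y) for all y > 0 and lim_{y→∞} y^{−L}·I(y) = 0; that is, any two such functions coincide on (0,∞). -/

import Mathlib

open Set Filter

noncomputable section

/-- A utility function: `C²` on `(0,∞)`, strictly increasing and strictly concave there,
satisfying the Inada conditions. -/
def IsUtility (U : ℝ → ℝ) : Prop :=
  ContDiffOn ℝ 2 U (Set.Ioi 0) ∧
  (∀ x > 0, 0 < deriv U x) ∧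
  (∀ x > 0, deriv (deriv U) x < 0) ∧
  Tendsto (deriv U) (nhdsWithin 0 (Set.Ioi 0)) atTop ∧
  Tendsto (deriv U) atTop (nhds 0)

/-- An inverse marginal function: positive, `C¹` on `(0,∞)`, strictly decreasing derivative,
with `I(∞)=0` and `I(0+)=∞`. -/
def IsInvMarginal (I : ℝ → ℝ) : Prop :=
  (∀ y > 0, 0 < I y) ∧
  ContDiffOn ℝ 1 I (Set.Ioi 0) ∧
  (∀ y > 0, deriv I y < 0) ∧
  Tendsto I atTop (nhds 0) ∧
  Tendsto I (nhdsWithin 0 (Set.Ioi 0)) atTop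

/-- `I` is the inverse of the marginal `U'` on the positive reals: `I = (U')⁻¹`. -/
def InvMarginalOf (I U : ℝ → ℝ) : Prop :=
  (∀ x > 0, I (deriv U x) = x) ∧ (∀ y > 0, 0 < I y ∧ deriv U (I y) = y)

/-- `J` is the inverse function of `I` on the positive reals. -/
def IsInverseOf (J I : ℝ → ℝ) : Prop :=
  (∀ y > 0, J (I y) = y) ∧ (∀ x > 0, 0 < J x ∧ I (J x) = x)

/-- The single-period inverse investment problem:
`U₀(x) = sup {p·U₁(x+π(u−1)) + (1−p)·U₁(x+π(d−1)) : −x/(u−1) ≤ π ≤ x/(1−d)}` for all `x > 0`. -/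
def SPIIP (u d p : ℝ) (U₀ U₁ : ℝ → ℝ) : Prop :=
  ∀ x > 0, U₀ x =
    sSup ((fun pi => p * U₁ (x + pi * (u - 1)) + (1 - p) * U₁ (x + pi * (d - 1))) ''
      Set.Icc (-(x / (u - 1))) (x / (1 - d)))

/-- Uniqueness for the functional equation among functions `I` with
`lim_{y→∞} y^{−L}·I(y) = 0`, where `L = log_a b`. -/
lemma aux_unique (r s L : ℝ) (hr : 1 < r) (hs : 0 < s) (hrs : s = r ^ L)
    (D : ℝ → ℝ) (hD : ∀ z > 0, D (r * z) = -s * D z)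
    (hlim : Tendsto (fun y => y ^ (-L) * D y) atTop (nhds 0)) :
    ∀ y > 0, D y = 0 := by
  intro y hy
  have hr0 : (0:ℝ) < r := lt_trans one_pos hr
  have hpow : ∀ k : ℕ, D (r ^ k * y) = (-s) ^ k * D y := by
    intro k
    induction k with
    | zero => simp
    | succ n ih =>
      have hpos : 0 < r ^ n * y := by positivity
      calc D (r ^ (n+1) * y) = D (r * (r ^ n * y)) := by ring_nf
        _ = -s * D (r ^ n * y) := hD _ hpos
        _ = (-s) ^ (n+1) * D y := by rw [ih]; ring
  have htend : Tendsto (fun n : ℕ => r ^ (2 * n) * y) atTop atTop := by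
    apply Tendsto.atTop_mul_const hy
    exact (tendsto_pow_atTop_atTop_of_one_lt hr).comp
      (tendsto_atTop_mono (fun n => by simp only [id]; omega) tendsto_id)
  have h1 : Tendsto (fun n : ℕ => (r ^ (2 * n) * y) ^ (-L) * D (r ^ (2 * n) * y))
      atTop (nhds 0) := hlim.comp htend
  have key : ∀ n : ℕ, (r ^ (2 * n) * y) ^ (-L) * D (r ^ (2 * n) * y)
      = y ^ (-L) * D y := by
    intro n
    rw [hpow]
    have hrn : (0:ℝ) < r ^ (2 * n) := by positivity
    have h2 : ((r:ℝ) ^ (2 * n)) ^ (-L) = (s ^ (2 * n))⁻¹ := by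
      rw [hrs, ← Real.rpow_natCast r (2*n), ← Real.rpow_natCast (r ^ L) (2*n),
        ← Real.rpow_mul hr0.le, ← Real.rpow_mul hr0.le, ← Real.rpow_neg hr0.le]
      ring_nf
    have h3 : (-s) ^ (2 * n) = s ^ (2 * n) := by
      rw [pow_mul, pow_mul, neg_sq]
    rw [Real.mul_rpow hrn.le hy.le, h2, h3]
    have hsn : s ^ (2 * n) ≠ 0 := by positivity
    field_simp
  simp only [key] at h1
  have h0 : y ^ (-L) * D y = 0 := tendsto_nhds_unique tendsto_const_nhds h1
  have : y ^ (-L) ≠ 0 := by positivity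
  exact (mul_eq_zero.mp h0).resolve_left this

theorem stmt9
    (u d p q a b c L : ℝ)
    (hu : 1 < u) (hd0 : 0 < d) (hd1 : d < 1) (hp0 : 0 < p) (hp1 : p < 1)
    (hq : q = (1 - d) / (u - d)) (ha : a = ((1 - p) * q) / (p * (1 - q)))
    (hb : b = (1 - q) / q) (hc : c = (1 - p) / (1 - q))
    (ha1 : a ≠ 1)
    (hL : L = Real.log b / Real.log a)
    (I₀ I J : ℝ → ℝ)
    (hIfeq : ∀ y > 0, I (a * y) + b * I y = (1 + b) * I₀ (c * y))
    (hIlim : Tendsto (fun y => y ^ (-L) * I y) atTop (nhds 0))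
    (hJfeq : ∀ y > 0, J (a * y) + b * J y = (1 + b) * I₀ (c * y))
    (hJlim : Tendsto (fun y => y ^ (-L) * J y) atTop (nhds 0)) :
    ∀ y > 0, I y = J y := by
  have hud : 0 < u - d := by linarith
  have hq0 : 0 < q := by rw [hq]; exact div_pos (by linarith) hud
  have hq1 : q < 1 := by
    rw [hq, div_lt_one hud]; linarith
  have ha0 : 0 < a := by
    rw [ha]; exact div_pos (mul_pos (by linarith) hq0) (mul_pos hp0 (by linarith))
  have hb0 : 0 < b := by rw [hb]; exact div_pos (by linarith) hq0
  have hloga : Real.log a ≠ 0 := by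
    intro h
    rcases (Real.log_eq_zero).mp h with h1 | h1 | h1
    · exact ha0.ne' h1
    · exact ha1 h1
    · linarith
  have hba : b = a ^ L := by
    rw [Real.rpow_def_of_pos ha0, hL, mul_comm (Real.log a),
      div_mul_cancel₀ _ hloga, Real.exp_log hb0]
  set D : ℝ → ℝ := fun z => I z - J z with hDdef
  have hD : ∀ z > 0, D (a * z) = -b * D z := by
    intro z hz
    have h1 := hIfeq z hz
    have h2 := hJfeq z hz
    simp only [hDdef]
    ring_nf
    linarith
  have hDlim : Tendsto (fun y => y ^ (-L) * D y) atTop (nhds 0) := by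
    have := hIlim.sub hJlim
    simpa [hDdef, mul_sub] using this
  have hfin : ∀ y > 0, D y = 0 := by
    rcases lt_or_gt_of_ne ha1 with hlt | hgt
    · -- a < 1, use r = a⁻¹, s = b⁻¹
      have hainv : 1 < a⁻¹ := (one_lt_inv₀ ha0).mpr hlt
      have hbinv : b⁻¹ = a⁻¹ ^ L := by
        rw [hba, ← Real.inv_rpow ha0.le]
      apply aux_unique a⁻¹ b⁻¹ L hainv (by positivity) hbinv D _ hDlim
      intro z hz
      have hz' : 0 < a⁻¹ * z := by positivity
      have := hD (a⁻¹ * z) hz'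
      rw [show a * (a⁻¹ * z) = z by field_simp] at this
      rw [this]
      field_simp
    · exact aux_unique a b L hgt hb0 hba D hD hDlim
  intro y hy
  have := hfin y hy
  simp only [hDdef] at this
  linarith
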